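/- Let G be a graph, C a longest cycle in G, and P = x→y a longest path in G∖C of length p̄ ≥ 0 with N_C(x) = N_C(y), |N_C(x)| ≥ 2. Let I_a, I_b be two distinct elementary segments created by N_C(x) on C. If every intermediate path between I_a and I_b is a single edge and there are exactly i such intermediate edges for some i ∈ {1,2,3}, then |I_a| + |I_b| ≥ 2p̄ + i + 5. -/

import Mathlib

open SimpleGraph

namespace ToughPaper

variable {V : Type*}

/-- Number of connected components of the subgraph induced on the complement of `S`. -/
noncomputable def numComp (G : SimpleGraph V) (S : Set V) : ℕ :=
  Nat.card (G.induce Sᶜ).ConnectedComponent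

/-- The toughness of `G` is greater than 1: `|S| > s(G∖S)` for every cutset `S`. -/
def ToughGtOne [Fintype V] (G : SimpleGraph V) : Prop :=
  ∀ S : Finset V, 1 < numComp G ↑S → numComp G ↑S < S.card

/-- The toughness of `G` is at most 1: some cutset `S` has `|S| ≤ s(G∖S)`. -/
def ToughLeOne [Fintype V] (G : SimpleGraph V) : Prop :=
  ∃ S : Finset V, 1 < numComp G ↑S ∧ S.card ≤ numComp G ↑S

/-- `G` is `k`-connected: more than `k` vertices and no cutset of size `< k`. -/
def KConnected [Fintype V] (k : ℕ) (G : SimpleGraph V) : Prop :=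
  k < Fintype.card V ∧ ∀ S : Finset V, S.card < k → (G.induce (↑S : Set V)ᶜ).Connected

/-- The (vertex) connectivity `κ(G)`. -/
noncomputable def conn [Fintype V] (G : SimpleGraph V) : ℕ :=
  sSup {k | KConnected k G}

/-- `C` is a longest cycle in `G`. -/
def IsLongestCycle (G : SimpleGraph V) {v : V} (C : G.Walk v v) : Prop :=
  C.IsCycle ∧ ∀ (u : V) (D : G.Walk u u), D.IsCycle → D.length ≤ C.length

/-- `P` is a longest path among paths of `G` avoiding the vertex list `W`
(i.e. a longest path of `G ∖ W`). -/
def IsLongestPathOff (G : SimpleGraph V) (W : List V) {x y : V} (P : G.Walk x y) : Prop :=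
  P.IsPath ∧ (∀ u ∈ P.support, u ∉ W) ∧
  ∀ (a b : V) (Q : G.Walk a b), Q.IsPath → (∀ u ∈ Q.support, u ∉ W) → Q.length ≤ P.length

/-- The neighbors of `x` lying on the vertex list `W` (e.g. `N_C(x)` for `W = C.support`). -/
def nbrsOn (G : SimpleGraph V) (W : List V) (x : V) : Set V :=
  {u | u ∈ W ∧ G.Adj x u}

/-- The number of edges of the oriented arc of the closed walk `C` from `a` to `b`. -/
noncomputable def arcLen [DecidableEq V] {G : SimpleGraph V} {v : V}
    (C : G.Walk v v) (a b : V) : ℕ :=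
  if h : ∃ (ha : a ∈ C.support), b ∈ (C.rotate a ha).support then
    ((C.rotate a h.choose).takeUntil b h.choose_spec).length
  else 0

/-- The vertices of the oriented arc of `C` from `a` to `b`. -/
noncomputable def arcSupport [DecidableEq V] {G : SimpleGraph V} {v : V}
    (C : G.Walk v v) (a b : V) : List V :=
  if h : ∃ (ha : a ∈ C.support), b ∈ (C.rotate a ha).support then
    ((C.rotate a h.choose).takeUntil b h.choose_spec).support
  else []

/-- The successor of `a` on the oriented closed walk `C`. -/
noncomputable def cycSucc [DecidableEq V] {G : SimpleGraph V} {v : V}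
    (C : G.Walk v v) (a : V) : V :=
  if h : a ∈ C.support then (C.rotate a h).getVert 1 else a

/-- The predecessor of `a` on the oriented closed walk `C`. -/
noncomputable def cycPred [DecidableEq V] {G : SimpleGraph V} {v : V}
    (C : G.Walk v v) (a : V) : V :=
  if h : a ∈ C.support then (C.rotate a h).getVert ((C.rotate a h).length - 1) else a

/-- `a` and `b` are consecutive elements of `N` on `C`; the arc `a→b` is then an
elementary segment created by `N`. -/
def ConsecOnC [DecidableEq V] {G : SimpleGraph V} {v : V}
    (C : G.Walk v v) (N : Set V) (a b : V) : Prop :=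
  a ∈ N ∧ b ∈ N ∧ a ≠ b ∧ ∀ w ∈ arcSupport C a b, w ≠ a → w ≠ b → w ∉ N

/-- `u` is an interior vertex of the arc `a→b` of `C`. -/
def InteriorArc [DecidableEq V] {G : SimpleGraph V} {v : V}
    (C : G.Walk v v) (a b : V) (u : V) : Prop :=
  u ∈ arcSupport C a b ∧ u ≠ a ∧ u ≠ b

/-- `L` is an intermediate path between the elementary segments `a₁→b₁` and `a₂→b₂`
(created by `N` on `C`), relative to the path with vertex list `Psupp`. -/
def IsInterPath [DecidableEq V] (G : SimpleGraph V) {v z w : V} (C : G.Walk v v)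
    (Psupp : List V) (N : Set V) (a₁ b₁ a₂ b₂ : V) (L : G.Walk z w) : Prop :=
  ConsecOnC C N a₁ b₁ ∧ ConsecOnC C N a₂ b₂ ∧ a₁ ≠ a₂ ∧
  L.IsPath ∧ 0 < L.length ∧ InteriorArc C a₁ b₁ z ∧ InteriorArc C a₂ b₂ w ∧
  ∀ u ∈ L.support, (u ∈ C.support ∨ u ∈ Psupp) → u = z ∨ u = w

/-- Vertex type of the Petersen graph: 2-element subsets of a 5-element set. -/
def PetersenV := {s : Finset (Fin 5) // s.card = 2}

instance : Fintype PetersenV := inferInstanceAs (Fintype {s : Finset (Fin 5) // s.card = 2})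
instance : DecidableEq PetersenV := inferInstanceAs (DecidableEq {s : Finset (Fin 5) // s.card = 2})

/-- The Petersen graph as the Kneser graph `K(5,2)`. -/
def petersen : SimpleGraph PetersenV where
  Adj a b := Disjoint a.1 b.1 ∧ a ≠ b
  symm := ⟨fun a b h => ⟨h.1.symm, h.2.symm⟩⟩
  loopless := ⟨fun a h => h.2 rfl⟩

instance : DecidableRel petersen.Adj :=
  fun a b => inferInstanceAs (Decidable (Disjoint a.1 b.1 ∧ a ≠ b))



section Toolkit
variable {G : SimpleGraph V}

/-- membership in the support of a rotated closed walk. -/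
lemma mem_support_rotate [DecidableEq V] {v u z : V} (c : G.Walk v v) (h : u ∈ c.support) :
    z ∈ (c.rotate u h).support ↔ z ∈ c.support := by
  cases c with
  | nil =>
    simp only [Walk.support_nil, List.mem_singleton] at h
    subst h
    rfl
  | cons hadj q =>
    have hrot := Walk.support_rotate (Walk.cons hadj q) u h
    have hmem := hrot.perm.mem_iff (a := z)
    have h1 : ((Walk.cons hadj q).rotate u h).support = u :: ((Walk.cons hadj q).rotate u h).support.tail := by
      rw [← Walk.support_eq_cons]
    have h2 : (Walk.cons hadj q).support = v :: (Walk.cons hadj q).support.tail := by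
      rw [← Walk.support_eq_cons]
    have hv : v ∈ (Walk.cons hadj q).support.tail := by
      simp only [Walk.support_cons, List.tail_cons]
      exact q.end_mem_support
    have hu : u ∈ ((Walk.cons hadj q).rotate u h).support.tail := by
      apply (hrot.perm.mem_iff).2
      rw [h2] at h
      rcases List.mem_cons.1 h with rfl | hz
      · exact hv
      · exact hz
    constructor
    · intro hz
      rw [h1] at hz
      rcases List.mem_cons.1 hz with rfl | hz
      · exact h
      · rw [h2]; exact List.mem_cons_of_mem _ (hmem.1 hz)
    · intro hz
      rw [h2] at hz
      rcases List.mem_cons.1 hz with rfl | hz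
      · rw [h1]; exact List.mem_cons_of_mem _ (hmem.2 hv)
      · rw [h1]; exact List.mem_cons_of_mem _ (hmem.2 hz)


lemma not_mem_dropLast_of_nodup {α : Type*} (l : List α) (hl : l ≠ []) (h : l.Nodup) :
    l.getLast hl ∉ l.dropLast := by
  conv at h => rw [← List.dropLast_append_getLast hl]
  rcases List.nodup_append.1 h with ⟨-, -, hd⟩
  intro hm
  exact hd _ hm _ (by simp) rfl

lemma closed_takeUntil_nil [DecidableEq V] {v w : V} (c : G.Walk v w) (h : v ∈ c.support) :
    c.takeUntil v h = Walk.nil := by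
  cases htake : c.takeUntil v h with
  | nil => rfl
  | @cons _ z _ hadj q =>
    exfalso
    have hcount := c.count_support_takeUntil_eq_one h
    rw [htake] at hcount
    simp only [Walk.support_cons, List.count_cons_self] at hcount
    have : v ∈ q.support := q.end_mem_support
    have : 1 ≤ q.support.count v := List.one_le_count_iff.2 this
    omega

/-- the end of a walk belongs to the tail of its support, provided the walk is nonnil. -/
lemma end_mem_support_tail {v w : V} (c : G.Walk v w) (hne : 0 < c.length) :
    w ∈ c.support.tail := by
  cases c with
  | nil => simp at hne
  | cons h q => simpa using q.end_mem_support

lemma closed_start_mem_support_tail {v : V} (c : G.Walk v v) (hne : 0 < c.length) :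
    v ∈ c.support.tail := end_mem_support_tail c hne

lemma cycle_pos_length {v : V} {c : G.Walk v v} (hc : c.IsCycle) : 0 < c.length := by
  cases c with
  | nil => exact absurd rfl hc.ne_nil
  | cons h q => simp [Walk.length_cons]

lemma cycle_dropLast_nodup {v : V} {c : G.Walk v v} (hc : c.IsCycle) :
    c.support.dropLast.Nodup := by
  cases c with
  | nil => exact absurd rfl hc.ne_nil
  | @cons _ b _ h q =>
    have hq : q.support.Nodup := by
      have := hc.support_nodup
      simpa using this
    have hne : q.support ≠ [] := q.support_ne_nil
    have hdl : (Walk.cons h q).support.dropLast = v :: q.support.dropLast := by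
      simp only [Walk.support_cons]
      exact List.dropLast_cons_of_ne_nil hne
    rw [hdl]
    refine List.nodup_cons.2 ⟨?_, hq.sublist (List.dropLast_sublist _)⟩
    have hlast : q.support.getLast hne = v := q.getLast_support
    intro hmem
    exact not_mem_dropLast_of_nodup q.support hne hq (by rwa [hlast])

lemma dart_fst_inj {v w : V} {c : G.Walk v w} (hnd : c.support.dropLast.Nodup)
    {d1 d2 : G.Dart} (h1 : d1 ∈ c.darts) (h2 : d2 ∈ c.darts)
    (h : d1.toProd.1 = d2.toProd.1) : d1 = d2 := by
  have hmap : (c.darts.map fun d : G.Dart => d.toProd.1).Nodup := by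
    rw [Walk.map_fst_darts]; exact hnd
  exact List.inj_on_of_nodup_map hmap h1 h2 h

lemma path_unique {v w : V} {c : G.Walk v w} (hnd : c.support.dropLast.Nodup)
    {a b : V} (p : G.Walk a b) :
    ∀ (q : G.Walk a b), p.IsPath → q.IsPath →
      (∀ d ∈ p.darts, d ∈ c.darts) → (∀ d ∈ q.darts, d ∈ c.darts) → p = q := by
  induction p with
  | nil =>
    intro q _ hq _ _
    cases q with
    | nil => rfl
    | cons h2 q' =>
      exfalso
      have := hq.support_nodup
      simp only [Walk.support_cons, List.nodup_cons] at this
      exact this.1 q'.end_mem_support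
  | @cons a c₁ b h p' ih =>
    intro q hp hq hpd hqd
    cases q with
    | nil =>
      exfalso
      have := hp.support_nodup
      simp only [Walk.support_cons, List.nodup_cons] at this
      exact this.1 p'.end_mem_support
    | @cons _ c₂ _ h2 q' =>
      have hd1 : (⟨(a, c₁), h⟩ : G.Dart) ∈ c.darts := hpd _ (by simp [Walk.darts_cons])
      have hd2 : (⟨(a, c₂), h2⟩ : G.Dart) ∈ c.darts := hqd _ (by simp [Walk.darts_cons])
      have hde : (⟨(a, c₁), h⟩ : G.Dart) = ⟨(a, c₂), h2⟩ := dart_fst_inj hnd hd1 hd2 rfl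
      have hc : c₁ = c₂ := by
        have := congrArg (fun d : G.Dart => d.toProd.2) hde
        simpa using this
      subst hc
      rw [ih q' hp.of_cons hq.of_cons
        (fun d hd => hpd d (by simp [Walk.darts_cons, hd]))
        (fun d hd => hqd d (by simp [Walk.darts_cons, hd]))]

lemma length_rotate [DecidableEq V] {v u : V} (c : G.Walk v v) (h : u ∈ c.support) :
    (c.rotate u h).length = c.length := by
  exact c.length_rotate u h

lemma mem_darts_rotate [DecidableEq V] {v u : V} (c : G.Walk v v) (h : u ∈ c.support)
    {d : G.Dart} : d ∈ (c.rotate u h).darts ↔ d ∈ c.darts :=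
  (Walk.rotate_darts c u h).perm.mem_iff

/-- splitting a cycle at a non-base vertex yields two paths. -/
lemma cycle_takeUntil_isPath [DecidableEq V] {u : V} {c : G.Walk u u} (hc : c.IsCycle)
    {b : V} (hb : b ∈ c.support) : (c.takeUntil b hb).IsPath := by
  by_cases hbu : b = u
  · subst hbu
    rw [closed_takeUntil_nil]
    exact Walk.IsPath.nil
  have happ := c.take_spec hb
  have hsupp : c.support = (c.takeUntil b hb).support ++ (c.dropUntil b hb).support.tail := by
    conv_lhs => rw [← happ]
    exact Walk.support_append _ _
  have htake_cons : (c.takeUntil b hb).support = u :: (c.takeUntil b hb).support.tail :=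
    Walk.support_eq_cons _
  have hc_cons : c.support = u :: c.support.tail := Walk.support_eq_cons _
  have htails : c.support.tail
      = (c.takeUntil b hb).support.tail ++ (c.dropUntil b hb).support.tail := by
    have := hsupp
    rw [hc_cons, htake_cons] at this
    simpa only [List.cons_append, List.cons.injEq, true_and] using this
  have hnd := hc.support_nodup
  rw [htails] at hnd
  rcases List.nodup_append.1 hnd with ⟨h1, h2, hdisj⟩
  rw [Walk.isPath_def, htake_cons]
  refine List.nodup_cons.2 ⟨?_, h1⟩
  intro hmem
  have hdrop_pos : 0 < (c.dropUntil b hb).length := by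
    rcases Nat.eq_zero_or_pos (c.dropUntil b hb).length with h0 | h
    · exact absurd (Walk.eq_of_length_eq_zero h0) hbu
    · exact h
  exact hdisj _ hmem _ (end_mem_support_tail _ hdrop_pos) rfl

lemma cycle_dropUntil_isPath [DecidableEq V] {u : V} {c : G.Walk u u} (hc : c.IsCycle)
    {b : V} (hb : b ∈ c.support) (hbu : b ≠ u) : (c.dropUntil b hb).IsPath := by
  have happ := c.take_spec hb
  have hsupp : c.support = (c.takeUntil b hb).support ++ (c.dropUntil b hb).support.tail := by
    conv_lhs => rw [← happ]
    exact Walk.support_append _ _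
  have htake_cons : (c.takeUntil b hb).support = u :: (c.takeUntil b hb).support.tail :=
    Walk.support_eq_cons _
  have hc_cons : c.support = u :: c.support.tail := Walk.support_eq_cons _
  have htails : c.support.tail
      = (c.takeUntil b hb).support.tail ++ (c.dropUntil b hb).support.tail := by
    have := hsupp
    rw [hc_cons, htake_cons] at this
    simpa only [List.cons_append, List.cons.injEq, true_and] using this
  have hnd := hc.support_nodup
  rw [htails] at hnd
  rcases List.nodup_append.1 hnd with ⟨h1, h2, hdisj⟩
  rw [Walk.isPath_def, Walk.support_eq_cons]
  refine List.nodup_cons.2 ⟨?_, h2⟩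
  intro hmem
  have htake_pos : 0 < (c.takeUntil b hb).length := by
    rcases Nat.eq_zero_or_pos (c.takeUntil b hb).length with h0 | h
    · exact absurd (Walk.eq_of_length_eq_zero h0).symm hbu
    · exact h
  have : b ∈ (c.takeUntil b hb).support.tail := by
    have := end_mem_support_tail _ htake_pos
    exact this
  exact hdisj _ this _ hmem rfl

end Toolkit

section Arcs
variable [DecidableEq V] {G : SimpleGraph V} {v : V}

/-- The canonical arc of a closed walk `C` from `a` to `b` (along the orientation). -/
noncomputable def arcW (C : G.Walk v v) {a b : V} (ha : a ∈ C.support) (hb : b ∈ C.support) :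
    G.Walk a b :=
  (C.rotate a ha).takeUntil b ((mem_support_rotate C ha).2 hb)

variable {C : G.Walk v v} {a b c : V}

lemma arcLen_eq (ha : a ∈ C.support) (hb : b ∈ C.support) :
    arcLen C a b = (arcW C ha hb).length := by
  unfold arcLen
  split
  · rfl
  · next h => exact absurd ⟨ha, (mem_support_rotate C ha).2 hb⟩ h

lemma arcSupport_eq (ha : a ∈ C.support) (hb : b ∈ C.support) :
    arcSupport C a b = (arcW C ha hb).support := by
  unfold arcSupport
  split
  · rfl
  · next h => exact absurd ⟨ha, (mem_support_rotate C ha).2 hb⟩ h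

lemma arcW_isPath (hC : C.IsCycle) (ha : a ∈ C.support) (hb : b ∈ C.support) :
    (arcW C ha hb).IsPath :=
  cycle_takeUntil_isPath (hC.rotate ha) _

lemma arcW_darts (ha : a ∈ C.support) (hb : b ∈ C.support) :
    ∀ d ∈ (arcW C ha hb).darts, d ∈ C.darts := fun d hd =>
  (mem_darts_rotate _ _).1 (Walk.darts_takeUntil_subset _ _ hd)

lemma arcW_support_subset (ha : a ∈ C.support) (hb : b ∈ C.support) :
    ∀ z ∈ (arcW C ha hb).support, z ∈ C.support := fun z hz =>
  (mem_support_rotate C ha).1 (Walk.support_takeUntil_subset _ _ hz)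

lemma arcW_nil (ha : a ∈ C.support) : arcW C ha ha = Walk.nil :=
  closed_takeUntil_nil _ _

lemma arcW_pos (ha : a ∈ C.support) (hb : b ∈ C.support) (hab : a ≠ b) :
    0 < (arcW C ha hb).length := by
  rcases Nat.eq_zero_or_pos (arcW C ha hb).length with h0 | h
  · exact absurd (Walk.eq_of_length_eq_zero h0) hab
  · exact h

/-- splitting the rotation of a cycle at `b` into the two arcs. -/
lemma arc_split (hC : C.IsCycle) (ha : a ∈ C.support) (hb : b ∈ C.support) (hab : a ≠ b) :
    (arcW C ha hb).append (arcW C hb ha) = C.rotate a ha := by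
  have hmem : b ∈ (C.rotate a ha).support := (mem_support_rotate C ha).2 hb
  have h1 : (C.rotate a ha).dropUntil b hmem = arcW C hb ha := by
    refine path_unique (cycle_dropLast_nodup hC) _ _
      (cycle_dropUntil_isPath (hC.rotate ha) hmem (by exact fun h => hab h.symm))
      (arcW_isPath hC hb ha)
      (fun d hd => (mem_darts_rotate _ _).1 (Walk.darts_dropUntil_subset _ _ hd))
      (arcW_darts hb ha)
  rw [← h1]
  exact (C.rotate a ha).take_spec hmem

lemma arc_split_length (hC : C.IsCycle) (ha : a ∈ C.support) (hb : b ∈ C.support) (hab : a ≠ b) :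
    (arcW C ha hb).length + (arcW C hb ha).length = C.length := by
  have := congrArg Walk.length (arc_split hC ha hb hab)
  rwa [Walk.length_append, length_rotate] at this

/-- splitting an arc at an intermediate vertex. -/
lemma arc_trans (hC : C.IsCycle) (ha : a ∈ C.support) (hb : b ∈ C.support) (hc : c ∈ C.support)
    (hmem : b ∈ (arcW C ha hc).support) :
    arcW C ha hc = (arcW C ha hb).append (arcW C hb hc) := by
  have h1 : (arcW C ha hc).takeUntil b hmem = arcW C ha hb := by
    refine path_unique (cycle_dropLast_nodup hC) _ _
      ((arcW_isPath hC ha hc).takeUntil hmem) (arcW_isPath hC ha hb)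
      (fun d hd => arcW_darts ha hc d (Walk.darts_takeUntil_subset _ _ hd))
      (arcW_darts ha hb)
  have h2 : (arcW C ha hc).dropUntil b hmem = arcW C hb hc := by
    refine path_unique (cycle_dropLast_nodup hC) _ _
      ((arcW_isPath hC ha hc).dropUntil hmem) (arcW_isPath hC hb hc)
      (fun d hd => arcW_darts ha hc d (Walk.darts_dropUntil_subset _ _ hd))
      (arcW_darts hb hc)
  rw [← h1, ← h2]
  exact ((arcW C ha hc).take_spec hmem).symm

lemma arcW_getVert (ha : a ∈ C.support) (hb : b ∈ C.support) :
    (C.rotate a ha).getVert (arcW C ha hb).length = b := by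
  have hm : b ∈ (C.rotate a ha).support := (mem_support_rotate C ha).2 hb
  have key : (((C.rotate a ha).takeUntil b hm).append ((C.rotate a ha).dropUntil b hm)).getVert
      ((C.rotate a ha).takeUntil b hm).length = b := by
    rw [Walk.getVert_append, if_neg (lt_irrefl _), Nat.sub_self, Walk.getVert_zero]
  rw [(C.rotate a ha).take_spec hm] at key
  exact key

lemma arc_end_inj (ha : a ∈ C.support) (hb : b ∈ C.support) (hc : c ∈ C.support)
    (h : (arcW C ha hb).length = (arcW C ha hc).length) : b = c := by
  have h1 := arcW_getVert ha hb
  have h2 := arcW_getVert ha hc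
  rw [h] at h1
  rw [h1] at h2
  exact h2

/-- if `b` comes no later than `c` along the rotation at `a`, then `b` lies on the arc to `c`. -/
lemma arc_mem_of_le (ha : a ∈ C.support) (hb : b ∈ C.support) (hc : c ∈ C.support)
    (hle : (arcW C ha hb).length ≤ (arcW C ha hc).length) :
    b ∈ (arcW C ha hc).support := by
  rcases lt_or_eq_of_le hle with hlt | heq
  · have hm : c ∈ (C.rotate a ha).support := (mem_support_rotate C ha).2 hc
    have hb' := arcW_getVert ha hb
    rw [← (C.rotate a ha).take_spec hm, Walk.getVert_append] at hb'
    have hlt' : (arcW C ha hb).length < ((C.rotate a ha).takeUntil c hm).length := hlt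
    rw [if_pos hlt'] at hb'
    refine Walk.mem_support_iff_exists_getVert.2 ⟨(arcW C ha hb).length, ?_, le_of_lt hlt⟩
    exact hb'
  · rw [arc_end_inj ha hb hc heq]
    exact Walk.end_mem_support _

end Arcs

section Build
variable {G : SimpleGraph V}

lemma build_bound {v x y c d : V} {C : G.Walk v v} {P : G.Walk x y}
    (hC : IsLongestCycle G C) (hP : P.IsPath) (hPoff : ∀ u ∈ P.support, u ∉ C.support)
    (W : G.Walk c d) (hW : W.IsPath) (hWC : ∀ z ∈ W.support, z ∈ C.support)
    (hcd : c ≠ d) (h1 : G.Adj y c) (h2 : G.Adj d x) :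
    W.length + P.length + 2 ≤ C.length := by
  have hQsupp : (W.append (Walk.cons h2 P)).support = W.support ++ P.support := by
    rw [Walk.support_append, Walk.support_cons, List.tail_cons]
  have hQpath : (W.append (Walk.cons h2 P)).IsPath := by
    rw [Walk.isPath_def, hQsupp]
    exact List.nodup_append.2 ⟨hW.support_nodup, hP.support_nodup,
      fun z hz z' hz' heq => hPoff z (heq ▸ hz') (hWC z hz)⟩
  have hedge : s(y, c) ∉ (W.append (Walk.cons h2 P)).edges := by
    intro hmem
    rw [Walk.edges_append, Walk.edges_cons] at hmem
    rcases List.mem_append.1 hmem with hmem | hmem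
    · exact hPoff y P.end_mem_support (hWC y (W.fst_mem_support_of_mem_edges hmem))
    · rcases List.mem_cons.1 hmem with heq | hmem
      · rw [Sym2.eq_iff] at heq
        rcases heq with ⟨rfl, rfl⟩ | ⟨rfl, rfl⟩
        · exact hPoff y P.end_mem_support (hWC y W.end_mem_support)
        · exact hcd rfl
      · exact hPoff c (P.fst_mem_support_of_mem_edges (Sym2.eq_swap ▸ hmem))
          (hWC c W.start_mem_support)
  have hDcyc : (Walk.cons h1 (W.append (Walk.cons h2 P))).IsCycle :=
    (Walk.cons_isCycle_iff _ h1).2 ⟨hQpath, hedge⟩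
  have hle := hC.2 y _ hDcyc
  simp only [Walk.length_cons, Walk.length_append] at hle
  omega

end Build


section Constructions
variable {G : SimpleGraph V} [DecidableEq V]

lemma count_support_eq {p q : V} (X : G.Walk p q) (z : V) :
    List.count z X.support = (if z = p then 1 else 0) + List.count z X.support.tail := by
  conv_lhs => rw [Walk.support_eq_cons X]
  by_cases h : z = p
  · subst h; simp [List.count_cons, -Walk.cons_tail_support]; omega
  · simp [List.count_cons, h, Ne.symm h, -Walk.cons_tail_support]

lemma count_reverse_tail {p q : V} (X : G.Walk p q) (z : V) :
    (if z = q then 1 else 0) + List.count z X.reverse.support.tail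
      = (if z = p then 1 else 0) + List.count z X.support.tail := by
  have h1 := count_support_eq X.reverse z
  have h2 := count_support_eq X z
  have h3 : List.count z X.reverse.support = List.count z X.support := by
    rw [Walk.support_reverse, List.count_reverse]
  omega

lemma ind_le_count {z p : V} {l : List V} (h : p ∈ l) :
    (if z = p then 1 else 0) ≤ List.count z l := by
  split_ifs with hz
  · subst hz; exact List.one_le_count_iff.2 h
  · exact Nat.zero_le _

lemma chord_ineq_one {v x y ξa ξa' ξb ξb' u w : V} {C : G.Walk v v} {P : G.Walk x y}
    (hC : IsLongestCycle G C) (hPpath : P.IsPath) (hPoff : ∀ z ∈ P.support, z ∉ C.support)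
    (hA : ξa ∈ C.support) (hA' : ξa' ∈ C.support) (hB : ξb ∈ C.support) (hB' : ξb' ∈ C.support)
    (hu : u ∈ C.support) (hw : w ∈ C.support)
    (hAA' : ξa ≠ ξa') (hAB : ξa ≠ ξb)
    (hu_mem : u ∈ (arcW C hA hA').support) (huA : u ≠ ξa) (huA' : u ≠ ξa')
    (hw_mem : w ∈ (arcW C hB hB').support) (hwB : w ≠ ξb) (hwB' : w ≠ ξb')
    (hord1 : ξb ∈ (arcW C hA' hA).support) (hord2 : ξb' ∈ (arcW C hB hA).support)
    (hyb : G.Adj y ξb) (hax : G.Adj ξa x) (huw : G.Adj u w) :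
    P.length + 3 ≤ (arcW C hA hu).length + (arcW C hB hw).length := by
  have hCcyc := hC.1
  have E1 := arc_trans hCcyc hA hu hA' hu_mem
  have E2 := arc_trans hCcyc hA' hB hA hord1
  have E3 := arc_trans hCcyc hB hB' hA hord2
  have E4 := arc_trans hCcyc hB hw hB' hw_mem
  have E0 := arc_split hCcyc hA hA' hAA'
  have hrot_eq := E0
  rw [E1, E2, E3, E4] at hrot_eq
  have htails := congrArg (fun (W : G.Walk ξa ξa) => W.support.tail) hrot_eq
  simp only [Walk.tail_support_append] at htails
  have hrot_nodup := (hCcyc.rotate hA).support_nodup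
  rw [← htails] at hrot_nodup
  -- the walk W1 along C and the chord
  set α1 := arcW C hA hu with hα1
  set α2 := arcW C hu hA' with hα2
  set M := arcW C hA' hB with hM
  set β1 := arcW C hB hw with hβ1
  set β2 := arcW C hw hB' with hβ2
  set T := arcW C hB' hA with hT
  have hu1t : u ∈ α1.support.tail :=
    end_mem_support_tail _ (arcW_pos hA hu (fun h => huA h.symm))
  have ha2t : ξa' ∈ α2.support.tail := end_mem_support_tail _ (arcW_pos hu hA' huA')
  have hw1t : w ∈ β1.support.tail :=
    end_mem_support_tail _ (arcW_pos hB hw (fun h => hwB h.symm))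
  let W1 : G.Walk ξb ξa :=
    M.reverse.append (α2.reverse.append (Walk.cons huw (β2.append T)))
  have hWs : W1.support = M.reverse.support ++ (α2.reverse.support.tail
      ++ (β2.support ++ T.support.tail)) := by
    show (M.reverse.append (α2.reverse.append (Walk.cons huw (β2.append T)))).support = _
    rw [Walk.support_append, Walk.tail_support_append, Walk.support_cons, List.tail_cons,
      Walk.support_append]
  have hWsub : ∀ z ∈ W1.support, z ∈ C.support := by
    intro z hz
    rw [hWs] at hz
    simp only [List.mem_append] at hz
    rcases hz with hz | hz | hz | hz
    · rw [Walk.support_reverse, List.mem_reverse] at hz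
      exact arcW_support_subset hA' hB z hz
    · have := List.mem_of_mem_tail hz
      rw [Walk.support_reverse, List.mem_reverse] at this
      exact arcW_support_subset hu hA' z this
    · exact arcW_support_subset hw hB' z hz
    · exact arcW_support_subset hB' hA z (List.mem_of_mem_tail hz)
  have hWpath : W1.IsPath := by
    rw [Walk.isPath_def, hWs, List.nodup_iff_count_le_one]
    intro z
    simp only [List.count_append]
    have hm := List.nodup_iff_count_le_one.1 hrot_nodup z
    simp only [List.count_append] at hm
    have f1 : List.count z M.reverse.support = List.count z M.support := by
      rw [Walk.support_reverse, List.count_reverse]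
    have f2 := count_support_eq M z
    have f3 := count_reverse_tail α2 z
    have f4 := count_support_eq β2 z
    have l1 := ind_le_count (z := z) hu1t
    have l2 := ind_le_count (z := z) ha2t
    have l3 := ind_le_count (z := z) hw1t
    split_ifs at f2 f3 f4 l1 l2 l3 <;> omega
  have hbound := build_bound hC hPpath hPoff W1 hWpath hWsub
    (fun h => hAB h.symm) hyb hax
  have hWlen : W1.length = M.length + (α2.length + (1 + (β2.length + T.length))) := by
    show (M.reverse.append (α2.reverse.append (Walk.cons huw (β2.append T)))).length = _
    rw [Walk.length_append, Walk.length_append, Walk.length_cons, Walk.length_append,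
      Walk.length_reverse, Walk.length_reverse]
    omega
  have hl0 := arc_split_length hCcyc hA hA' hAA'
  have hl1 := congrArg Walk.length E1
  have hl2 := congrArg Walk.length E2
  have hl3 := congrArg Walk.length E3
  have hl4 := congrArg Walk.length E4
  simp only [Walk.length_append] at hl1 hl2 hl3 hl4
  omega

lemma chord_ineq_two {v x y ξa ξa' ξb ξb' u w : V} {C : G.Walk v v} {P : G.Walk x y}
    (hC : IsLongestCycle G C) (hPpath : P.IsPath) (hPoff : ∀ z ∈ P.support, z ∉ C.support)
    (hA : ξa ∈ C.support) (hA' : ξa' ∈ C.support) (hB : ξb ∈ C.support) (hB' : ξb' ∈ C.support)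
    (hu : u ∈ C.support) (hw : w ∈ C.support)
    (hAA' : ξa ≠ ξa')
    (hu_mem : u ∈ (arcW C hA hA').support) (huA : u ≠ ξa) (huA' : u ≠ ξa')
    (hw_mem : w ∈ (arcW C hB hB').support) (hwB : w ≠ ξb) (hwB' : w ≠ ξb')
    (hord1 : ξb ∈ (arcW C hA' hA).support) (hord2 : ξb' ∈ (arcW C hB hA).support)
    (hya' : G.Adj y ξa') (hb'x : G.Adj ξb' x) (huw : G.Adj u w) :
    P.length + 3 ≤ (arcW C hu hA').length + (arcW C hw hB').length := by
  have hCcyc := hC.1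
  have E1 := arc_trans hCcyc hA hu hA' hu_mem
  have E2 := arc_trans hCcyc hA' hB hA hord1
  have E3 := arc_trans hCcyc hB hB' hA hord2
  have E4 := arc_trans hCcyc hB hw hB' hw_mem
  have E0 := arc_split hCcyc hA hA' hAA'
  have hrot_eq := E0
  rw [E1, E2, E3, E4] at hrot_eq
  have htails := congrArg (fun (W : G.Walk ξa ξa) => W.support.tail) hrot_eq
  simp only [Walk.tail_support_append] at htails
  have hrot_nodup := (hCcyc.rotate hA).support_nodup
  rw [← htails] at hrot_nodup
  set α1 := arcW C hA hu with hα1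
  set α2 := arcW C hu hA' with hα2
  set M := arcW C hA' hB with hM
  set β1 := arcW C hB hw with hβ1
  set β2 := arcW C hw hB' with hβ2
  set T := arcW C hB' hA with hT
  have ha2t : ξa' ∈ α2.support.tail := end_mem_support_tail _ (arcW_pos hu hA' huA')
  have hw1t : w ∈ β1.support.tail :=
    end_mem_support_tail _ (arcW_pos hB hw (fun h => hwB h.symm))
  have hb2t : ξb' ∈ β2.support.tail := end_mem_support_tail _ (arcW_pos hw hB' hwB')
  have hA'B' : ξa' ≠ ξb' := by
    intro h
    have hm := List.nodup_iff_count_le_one.1 hrot_nodup ξa'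
    simp only [List.count_append] at hm
    have c1 : 1 ≤ List.count ξa' α2.support.tail := List.one_le_count_iff.2 ha2t
    have c2 : 1 ≤ List.count ξa' β2.support.tail := List.one_le_count_iff.2 (h ▸ hb2t)
    omega
  let W2 : G.Walk ξa' ξb' :=
    M.append (β1.append (Walk.cons huw.symm (α1.reverse.append T.reverse)))
  have hWs : W2.support = M.support ++ (β1.support.tail
      ++ (α1.reverse.support ++ T.reverse.support.tail)) := by
    show (M.append (β1.append (Walk.cons huw.symm (α1.reverse.append T.reverse)))).support = _
    rw [Walk.support_append, Walk.tail_support_append, Walk.support_cons, List.tail_cons,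
      Walk.support_append]
  have hWsub : ∀ z ∈ W2.support, z ∈ C.support := by
    intro z hz
    rw [hWs] at hz
    simp only [List.mem_append] at hz
    rcases hz with hz | hz | hz | hz
    · exact arcW_support_subset hA' hB z hz
    · exact arcW_support_subset hB hw z (List.mem_of_mem_tail hz)
    · rw [Walk.support_reverse, List.mem_reverse] at hz
      exact arcW_support_subset hA hu z hz
    · have := List.mem_of_mem_tail hz
      rw [Walk.support_reverse, List.mem_reverse] at this
      exact arcW_support_subset hB' hA z this
  have hWpath : W2.IsPath := by
    rw [Walk.isPath_def, hWs, List.nodup_iff_count_le_one]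
    intro z
    simp only [List.count_append]
    have hm := List.nodup_iff_count_le_one.1 hrot_nodup z
    simp only [List.count_append] at hm
    have f1 : List.count z α1.reverse.support = List.count z α1.support := by
      rw [Walk.support_reverse, List.count_reverse]
    have f2 := count_support_eq M z
    have f3 := count_reverse_tail T z
    have f4 := count_support_eq α1 z
    have f5 := count_support_eq β1 z
    have l2 := ind_le_count (z := z) ha2t
    have l3 := ind_le_count (z := z) hw1t
    have l4 := ind_le_count (z := z) hb2t
    have hβ1eq : β1.support = ξb :: β1.support.tail := Walk.support_eq_cons _
    split_ifs at f2 f3 f4 f5 l2 l3 l4 <;> omega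
  have hbound := build_bound hC hPpath hPoff W2 hWpath hWsub hA'B' hya' hb'x
  have hWlen : W2.length = M.length + (β1.length + (1 + (α1.length + T.length))) := by
    show (M.append (β1.append (Walk.cons huw.symm (α1.reverse.append T.reverse)))).length = _
    rw [Walk.length_append, Walk.length_append, Walk.length_cons, Walk.length_append,
      Walk.length_reverse, Walk.length_reverse]
    omega
  have hl0 := arc_split_length hCcyc hA hA' hAA'
  have hl1 := congrArg Walk.length E1
  have hl2 := congrArg Walk.length E2
  have hl3 := congrArg Walk.length E3
  have hl4 := congrArg Walk.length E4
  simp only [Walk.length_append] at hl1 hl2 hl3 hl4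
  omega

lemma chord_ineq_nested {v x y ξa ξa' ξb ξb' u1 u2 w1 w2 : V} {C : G.Walk v v} {P : G.Walk x y}
    (hC : IsLongestCycle G C) (hPpath : P.IsPath) (hPoff : ∀ z ∈ P.support, z ∉ C.support)
    (hA : ξa ∈ C.support) (hA' : ξa' ∈ C.support) (hB : ξb ∈ C.support) (hB' : ξb' ∈ C.support)
    (hu1 : u1 ∈ C.support) (hu2 : u2 ∈ C.support) (hw1 : w1 ∈ C.support) (hw2 : w2 ∈ C.support)
    (hAA' : ξa ≠ ξa') (hBB' : ξb ≠ ξb')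
    (hu2_mem : u2 ∈ (arcW C hA hA').support) (hu12 : u1 ∈ (arcW C hA hu2).support)
    (hw1_mem : w1 ∈ (arcW C hB hB').support) (hw21 : w2 ∈ (arcW C hB hw1).support)
    (hu1u2 : u1 ≠ u2) (hw2w1 : w2 ≠ w1) (hw2B : w2 ≠ ξb) (hw1B' : w1 ≠ ξb')
    (hord1 : ξb ∈ (arcW C hA' hA).support) (hord2 : ξb' ∈ (arcW C hB hA).support)
    (hyb' : G.Adj y ξb') (hbx : G.Adj ξb x)
    (h11 : G.Adj u1 w1) (h22 : G.Adj w2 u2) :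
    P.length + 4 ≤ (arcW C hu1 hu2).length + (arcW C hB hw2).length
      + (arcW C hw1 hB').length := by
  have hCcyc := hC.1
  have E1b := arc_trans hCcyc hA hu2 hA' hu2_mem
  have E1a := arc_trans hCcyc hA hu1 hu2 hu12
  have E2 := arc_trans hCcyc hA' hB hA hord1
  have E3 := arc_trans hCcyc hB hB' hA hord2
  have E4b := arc_trans hCcyc hB hw1 hB' hw1_mem
  have E4a := arc_trans hCcyc hB hw2 hw1 hw21
  have E0 := arc_split hCcyc hA hA' hAA'
  have hrot_eq := E0
  rw [E1b, E1a, E2, E3, E4b, E4a] at hrot_eq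
  have htails := congrArg (fun (W : G.Walk ξa ξa) => W.support.tail) hrot_eq
  simp only [Walk.tail_support_append] at htails
  have hrot_nodup := (hCcyc.rotate hA).support_nodup
  rw [← htails] at hrot_nodup
  set γ1 := arcW C hA hu1 with hγ1
  set γ2 := arcW C hu1 hu2 with hγ2
  set γ3 := arcW C hu2 hA' with hγ3
  set M := arcW C hA' hB with hM
  set δ1 := arcW C hB hw2 with hδ1
  set δ2 := arcW C hw2 hw1 with hδ2
  set δ3 := arcW C hw1 hB' with hδ3
  set T := arcW C hB' hA with hT
  have hu2t : u2 ∈ γ2.support.tail := end_mem_support_tail _ (arcW_pos hu1 hu2 hu1u2)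
  have hw2t : w2 ∈ δ1.support.tail :=
    end_mem_support_tail _ (arcW_pos hB hw2 (fun h => hw2B h.symm))
  have hb't : ξb' ∈ δ3.support.tail := end_mem_support_tail _ (arcW_pos hw1 hB' hw1B')
  let W3 : G.Walk ξb' ξb :=
    T.append (γ1.append (Walk.cons h11 (δ2.reverse.append (Walk.cons h22 (γ3.append M)))))
  have hWs : W3.support = T.support ++ (γ1.support.tail
      ++ (δ2.reverse.support ++ (γ3.support ++ M.support.tail))) := by
    show (T.append (γ1.append (Walk.cons h11 (δ2.reverse.append
      (Walk.cons h22 (γ3.append M)))))).support = _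
    rw [Walk.support_append, Walk.tail_support_append, Walk.support_cons, List.tail_cons,
      Walk.support_append, Walk.support_cons, List.tail_cons, Walk.support_append]
  have hWsub : ∀ z ∈ W3.support, z ∈ C.support := by
    intro z hz
    rw [hWs] at hz
    simp only [List.mem_append] at hz
    rcases hz with hz | hz | hz | hz | hz
    · exact arcW_support_subset hB' hA z hz
    · exact arcW_support_subset hA hu1 z (List.mem_of_mem_tail hz)
    · rw [Walk.support_reverse, List.mem_reverse] at hz
      exact arcW_support_subset hw2 hw1 z hz
    · exact arcW_support_subset hu2 hA' z hz
    · exact arcW_support_subset hA' hB z (List.mem_of_mem_tail hz)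
  have hWpath : W3.IsPath := by
    rw [Walk.isPath_def, hWs, List.nodup_iff_count_le_one]
    intro z
    simp only [List.count_append]
    have hm := List.nodup_iff_count_le_one.1 hrot_nodup z
    simp only [List.count_append] at hm
    have f1 : List.count z δ2.reverse.support = List.count z δ2.support := by
      rw [Walk.support_reverse, List.count_reverse]
    have f2 := count_support_eq T z
    have f3 := count_support_eq δ2 z
    have f4 := count_support_eq γ3 z
    have l1 := ind_le_count (z := z) hu2t
    have l2 := ind_le_count (z := z) hw2t
    have l3 := ind_le_count (z := z) hb't
    split_ifs at f2 f3 f4 l1 l2 l3 <;> omega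
  have hbound := build_bound hC hPpath hPoff W3 hWpath hWsub (fun h => hBB' h.symm) hyb' hbx
  have hWlen : W3.length = T.length + (γ1.length + (1 + (δ2.length + (1
      + (γ3.length + M.length))))) := by
    show (T.append (γ1.append (Walk.cons h11 (δ2.reverse.append
      (Walk.cons h22 (γ3.append M)))))).length = _
    rw [Walk.length_append, Walk.length_append, Walk.length_cons, Walk.length_append,
      Walk.length_cons, Walk.length_append, Walk.length_reverse]
    omega
  have hl0 := arc_split_length hCcyc hA hA' hAA'
  have hl1a := congrArg Walk.length E1a
  have hl1b := congrArg Walk.length E1b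
  have hl2 := congrArg Walk.length E2
  have hl3 := congrArg Walk.length E3
  have hl4a := congrArg Walk.length E4a
  have hl4b := congrArg Walk.length E4b
  simp only [Walk.length_append] at hl1a hl1b hl2 hl3 hl4a hl4b
  omega

end Constructions


/-- **Lemma 2 (a2).** With `C` a longest cycle, `P = x→y` a longest path in `G ∖ C` of
length `p̄ ≥ 0`, `N_C(x) = N_C(y)`, `|N_C(x)| ≥ 2`: if all intermediate paths between the
distinct elementary segments `I_a = ξ_a→ξ_a'` and `I_b = ξ_b→ξ_b'` are single edges and
there are exactly `i ∈ {1,2,3}` such intermediate edges, then `|I_a| + |I_b| ≥ 2p̄ + i + 5`. -/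
theorem lemma2_a2 {V : Type*} [Fintype V] [DecidableEq V]
    (G : SimpleGraph V) {v x y ξa ξa' ξb ξb' : V} (i : ℕ)
    (C : G.Walk v v) (P : G.Walk x y)
    (hC : IsLongestCycle G C) (hP : IsLongestPathOff G C.support P)
    (hN : nbrsOn G C.support x = nbrsOn G C.support y)
    (hcard : 2 ≤ (nbrsOn G C.support x).ncard)
    (ha : ConsecOnC C (nbrsOn G C.support x) ξa ξa')
    (hb : ConsecOnC C (nbrsOn G C.support x) ξb ξb')
    (hab : ξa ≠ ξb)
    (hedges : ∀ (z w : V) (L : G.Walk z w),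
      IsInterPath G C P.support (nbrsOn G C.support x) ξa ξa' ξb ξb' L → L.length = 1)
    (hi : i ∈ ({1, 2, 3} : Set ℕ))
    (hcount : {p : V × V | InteriorArc C ξa ξa' p.1 ∧ InteriorArc C ξb ξb' p.2 ∧
        G.Adj p.1 p.2}.ncard = i) :
    2 * P.length + i + 5 ≤ arcLen C ξa ξa' + arcLen C ξb ξb' := by
  classical
  have hCcyc := hC.1
  obtain ⟨hPpath, hPoff, -⟩ := hP
  obtain ⟨hξaN, hξa'N, hAA', hano⟩ := ha
  obtain ⟨hξbN, hξb'N, hBB', hbno⟩ := hb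
  have hA : ξa ∈ C.support := hξaN.1
  have hA' : ξa' ∈ C.support := hξa'N.1
  have hB : ξb ∈ C.support := hξbN.1
  have hB' : ξb' ∈ C.support := hξb'N.1
  have hadjy : ∀ ξ, ξ ∈ nbrsOn G C.support x → G.Adj y ξ := by
    intro ξ h
    rw [hN] at h
    exact h.2
  -- first order fact : ξb lies on the complementary arc from ξa' to ξa
  have hord1 : ξb ∈ (arcW C hA' hA).support := by
    by_cases hba' : ξb = ξa'
    · rw [hba']
      exact Walk.start_mem_support _
    · have hnotIa : ξb ∉ (arcW C hA hA').support := by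
        intro hmem'
        exact hano ξb (by rwa [arcSupport_eq hA hA']) (fun h => hab h.symm) hba' hξbN
      have hrotmem : ξb ∈ (C.rotate ξa hA).support := (mem_support_rotate C hA).2 hB
      rw [← arc_split hCcyc hA hA' hAA', Walk.mem_support_append_iff] at hrotmem
      tauto
  -- second order fact : ξb' lies on the arc from ξb back to ξa
  have hord2 : ξb' ∈ (arcW C hB hA).support := by
    by_cases hcase : ξb' ∈ (arcW C hB hA).support
    · exact hcase
    exfalso
    have E0' := arc_split hCcyc hA' hA (fun h => hAA' h.symm)
    have E2 := arc_trans hCcyc hA' hB hA hord1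
    rcases eq_or_ne ξb' ξa' with rfl | hb'a'
    · -- the case ξb' = ξa' : then the arc ξb → ξb' would contain ξa in its interior
      have hrot' := E0'
      rw [E2] at hrot'
      have htails' := congrArg (fun (W : G.Walk ξb' ξb') => W.support.tail) hrot'
      simp only [Walk.tail_support_append] at htails'
      have hnd' := (hCcyc.rotate hA').support_nodup
      rw [← htails'] at hnd'
      have hA'B : ξb' ≠ ξb := fun h => hBB' h.symm
      have hξbM : ξb ∈ (arcW C hA' hB).support.tail :=
        end_mem_support_tail _ (arcW_pos hA' hB hA'B)
      have hKpath : ((arcW C hB hA).append (arcW C hA hA')).IsPath := by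
        rw [Walk.isPath_def, Walk.support_append, List.nodup_iff_count_le_one]
        intro z
        simp only [List.count_append]
        have hm := List.nodup_iff_count_le_one.1 hnd' z
        simp only [List.count_append] at hm
        have f1 := count_support_eq (arcW C hB hA) z
        have l1 := ind_le_count (z := z) hξbM
        split_ifs at f1 l1 <;> omega
      have hKident : arcW C hB hB' = (arcW C hB hA).append (arcW C hA hA') := by
        refine path_unique (cycle_dropLast_nodup hCcyc) _ _ (arcW_isPath hCcyc hB hB')
          hKpath (arcW_darts hB hB') ?_
        intro d hd
        rw [Walk.darts_append, List.mem_append] at hd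
        rcases hd with hd | hd
        · exact arcW_darts hB hA d hd
        · exact arcW_darts hA hA' d hd
      have hξa_in : ξa ∈ arcSupport C ξb ξb' := by
        rw [arcSupport_eq hB hB', hKident, Walk.mem_support_append_iff]
        exact Or.inl (arcW C hB hA).end_mem_support
      exact hbno ξa hξa_in hab hAA' hξaN
    · -- the case ξb' ≠ ξa' : ξb' would lie strictly inside the arc ξa' → ξb
      have hb'ξa : ξb' ≠ ξa := by
        intro h
        apply hcase
        rw [h]
        exact Walk.end_mem_support _
      have hnotIa' : ξb' ∉ (arcW C hA hA').support := by
        intro hmem'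
        exact hano ξb' (by rwa [arcSupport_eq hA hA']) hb'ξa hb'a' hξb'N
      have hM1 : ξb' ∈ (arcW C hA' hB).support := by
        have hrotmem : ξb' ∈ (C.rotate ξa' hA').support := (mem_support_rotate C hA').2 hB'
        rw [← E0', Walk.mem_support_append_iff] at hrotmem
        rcases hrotmem with hmem' | hmem'
        · rw [E2, Walk.mem_support_append_iff] at hmem'
          tauto
        · exact absurd hmem' hnotIa'
      have EM := arc_trans hCcyc hA' hB' hB hM1
      have hrot' := E0'
      rw [E2, EM] at hrot'
      have htails' := congrArg (fun (W : G.Walk ξa' ξa') => W.support.tail) hrot'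
      simp only [Walk.tail_support_append] at htails'
      have hnd' := (hCcyc.rotate hA').support_nodup
      rw [← htails'] at hnd'
      have hξbM2 : ξb ∈ (arcW C hB' hB).support.tail :=
        end_mem_support_tail _ (arcW_pos hB' hB (fun h => hBB' h.symm))
      have hKpath : ((arcW C hB hA).append ((arcW C hA hA').append (arcW C hA' hB'))).IsPath := by
        rw [Walk.isPath_def, Walk.support_append, Walk.tail_support_append,
          List.nodup_iff_count_le_one]
        intro z
        simp only [List.count_append]
        have hm := List.nodup_iff_count_le_one.1 hnd' z
        simp only [List.count_append] at hm
        have f1 := count_support_eq (arcW C hB hA) z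
        have f2 := count_support_eq (arcW C hA hA') z
        have l1 := ind_le_count (z := z) hξbM2
        have hIat : (arcW C hA hA').support = ξa :: (arcW C hA hA').support.tail :=
          Walk.support_eq_cons _
        split_ifs at f1 f2 l1 <;> omega
      have hKident : arcW C hB hB'
          = (arcW C hB hA).append ((arcW C hA hA').append (arcW C hA' hB')) := by
        refine path_unique (cycle_dropLast_nodup hCcyc) _ _ (arcW_isPath hCcyc hB hB')
          hKpath (arcW_darts hB hB') ?_
        intro d hd
        rw [Walk.darts_append, List.mem_append] at hd
        rcases hd with hd | hd
        · exact arcW_darts hB hA d hd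
        · rw [Walk.darts_append, List.mem_append] at hd
          rcases hd with hd | hd
          · exact arcW_darts hA hA' d hd
          · exact arcW_darts hA' hB' d hd
      have hξa_in : ξa ∈ arcSupport C ξb ξb' := by
        rw [arcSupport_eq hB hB', hKident, Walk.mem_support_append_iff]
        exact Or.inl (arcW C hB hA).end_mem_support
      exact hbno ξa hξa_in hab (fun h => hb'ξa h.symm) hξaN
  -- global splitting of the cycle
  have E2 := arc_trans hCcyc hA' hB hA hord1
  have E3 := arc_trans hCcyc hB hB' hA hord2
  have E0 := arc_split hCcyc hA hA' hAA'
  have hξaSt : ξa ∈ (arcW C hB hA).support.tail :=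
    end_mem_support_tail _ (arcW_pos hB hA (fun h => hab h.symm))
  have hξb'Ibt : ξb' ∈ (arcW C hB hB').support.tail :=
    end_mem_support_tail _ (arcW_pos hB hB' hBB')
  -- identification of the arc ξa → ξb
  have hIdent1 : arcW C hA hB = (arcW C hA hA').append (arcW C hA' hB) := by
    have hrot1 := E0
    rw [E2] at hrot1
    have htails1 := congrArg (fun (W : G.Walk ξa ξa) => W.support.tail) hrot1
    simp only [Walk.tail_support_append] at htails1
    have hnd1 := (hCcyc.rotate hA).support_nodup
    rw [← htails1] at hnd1
    have hKpath : ((arcW C hA hA').append (arcW C hA' hB)).IsPath := by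
      rw [Walk.isPath_def, Walk.support_append, List.nodup_iff_count_le_one]
      intro z
      simp only [List.count_append]
      have hm := List.nodup_iff_count_le_one.1 hnd1 z
      simp only [List.count_append] at hm
      have f1 := count_support_eq (arcW C hA hA') z
      have l1 := ind_le_count (z := z) hξaSt
      split_ifs at f1 l1 <;> omega
    refine (path_unique (cycle_dropLast_nodup hCcyc) _ _ (arcW_isPath hCcyc hA hB)
      hKpath (arcW_darts hA hB) ?_)
    intro d hd
    rw [Walk.darts_append, List.mem_append] at hd
    rcases hd with hd | hd
    · exact arcW_darts hA hA' d hd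
    · exact arcW_darts hA' hB d hd
  have horda2' : ξa' ∈ (arcW C hA hB).support := by
    rw [hIdent1, Walk.mem_support_append_iff]
    exact Or.inl (arcW C hA hA').end_mem_support
  -- identification of the arc ξb' → ξb
  have hIdent2 : arcW C hB' hB
      = (arcW C hB' hA).append ((arcW C hA hA').append (arcW C hA' hB)) := by
    have hrot2 := E0
    rw [E2, E3] at hrot2
    have htails2 := congrArg (fun (W : G.Walk ξa ξa) => W.support.tail) hrot2
    simp only [Walk.tail_support_append] at htails2
    have hnd2 := (hCcyc.rotate hA).support_nodup
    rw [← htails2] at hnd2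
    have hKpath : ((arcW C hB' hA).append
        ((arcW C hA hA').append (arcW C hA' hB))).IsPath := by
      rw [Walk.isPath_def, Walk.support_append, Walk.tail_support_append,
        List.nodup_iff_count_le_one]
      intro z
      simp only [List.count_append]
      have hm := List.nodup_iff_count_le_one.1 hnd2 z
      simp only [List.count_append] at hm
      have f1 := count_support_eq (arcW C hB' hA) z
      have f2 := count_support_eq (arcW C hA hA') z
      have l1 := ind_le_count (z := z) hξb'Ibt
      have l2 := ind_le_count (z := z) hξaSt
      have f5 : List.count z (arcW C hB hA).support.tail
          = List.count z (arcW C hB hB').support.tail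
            + List.count z (arcW C hB' hA).support.tail := by
        have := congrArg (fun (W : G.Walk ξb ξa) => List.count z W.support.tail) E3
        simpa only [Walk.tail_support_append, List.count_append] using this
      split_ifs at f1 f2 l1 l2 <;> omega
    refine (path_unique (cycle_dropLast_nodup hCcyc) _ _ (arcW_isPath hCcyc hB' hB)
      hKpath (arcW_darts hB' hB) ?_)
    intro d hd
    rw [Walk.darts_append, List.mem_append] at hd
    rcases hd with hd | hd
    · exact arcW_darts hB' hA d hd
    · rw [Walk.darts_append, List.mem_append] at hd
      rcases hd with hd | hd
      · exact arcW_darts hA hA' d hd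
      · exact arcW_darts hA' hB d hd
  have horda1' : ξa ∈ (arcW C hB' hB).support := by
    rw [hIdent2, Walk.mem_support_append_iff]
    exact Or.inl (arcW C hB' hA).end_mem_support
  -- key inequalities for a single intermediate edge
  set SS := {p : V × V | InteriorArc C ξa ξa' p.1 ∧ InteriorArc C ξb ξb' p.2
    ∧ G.Adj p.1 p.2} with hSS
  have hmemSS : ∀ p : V × V, p ∈ SS →
      ∃ (h1 : p.1 ∈ C.support) (h2 : p.2 ∈ C.support),
        p.1 ∈ (arcW C hA hA').support ∧ p.2 ∈ (arcW C hB hB').support := by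
    intro p hp
    obtain ⟨h1, h2, hadj⟩ := hp
    have hu_mem : p.1 ∈ (arcW C hA hA').support := by
      rw [← arcSupport_eq hA hA']; exact h1.1
    have hw_mem : p.2 ∈ (arcW C hB hB').support := by
      rw [← arcSupport_eq hB hB']; exact h2.1
    exact ⟨arcW_support_subset hA hA' _ hu_mem, arcW_support_subset hB hB' _ hw_mem,
      hu_mem, hw_mem⟩
  have key1 : ∀ p : V × V, p ∈ SS →
      P.length + 3 ≤ arcLen C ξa p.1 + arcLen C ξb p.2 := by
    intro p hp
    obtain ⟨h1C, h2C, hu_mem, hw_mem⟩ := hmemSS p hp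
    obtain ⟨h1, h2, hadj⟩ := hp
    rw [arcLen_eq hA h1C, arcLen_eq hB h2C]
    exact chord_ineq_one hC hPpath hPoff hA hA' hB hB' h1C h2C hAA' hab
      hu_mem h1.2.1 h1.2.2 hw_mem h2.2.1 h2.2.2 hord1 hord2
      (hadjy _ hξbN) (hξaN.2).symm hadj
  have key2 : ∀ p : V × V, p ∈ SS →
      P.length + 3 ≤ arcLen C p.1 ξa' + arcLen C p.2 ξb' := by
    intro p hp
    obtain ⟨h1C, h2C, hu_mem, hw_mem⟩ := hmemSS p hp
    obtain ⟨h1, h2, hadj⟩ := hp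
    rw [arcLen_eq h1C hA', arcLen_eq h2C hB']
    exact chord_ineq_two hC hPpath hPoff hA hA' hB hB' h1C h2C hAA'
      hu_mem h1.2.1 h1.2.2 hw_mem h2.2.1 h2.2.2 hord1 hord2
      (hadjy _ hξa'N) (hξb'N.2).symm hadj
  have splitA : ∀ p : V × V, p ∈ SS →
      arcLen C ξa ξa' = arcLen C ξa p.1 + arcLen C p.1 ξa' := by
    intro p hp
    obtain ⟨h1C, h2C, hu_mem, hw_mem⟩ := hmemSS p hp
    have := congrArg Walk.length (arc_trans hCcyc hA h1C hA' hu_mem)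
    rw [Walk.length_append] at this
    rw [arcLen_eq hA hA', arcLen_eq hA h1C, arcLen_eq h1C hA']
    exact this
  have splitB : ∀ p : V × V, p ∈ SS →
      arcLen C ξb ξb' = arcLen C ξb p.2 + arcLen C p.2 ξb' := by
    intro p hp
    obtain ⟨h1C, h2C, hu_mem, hw_mem⟩ := hmemSS p hp
    have := congrArg Walk.length (arc_trans hCcyc hB h2C hB' hw_mem)
    rw [Walk.length_append] at this
    rw [arcLen_eq hB hB', arcLen_eq hB h2C, arcLen_eq h2C hB']
    exact this
  -- the nested-pair inequality
  have nest_of_lt : ∀ p q : V × V, p ∈ SS → q ∈ SS →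
      arcLen C ξa p.1 < arcLen C ξa q.1 → arcLen C ξb q.2 < arcLen C ξb p.2 →
      2 * P.length + 8 ≤ arcLen C ξa ξa' + arcLen C ξb ξb' := by
    intro p q hp hq hlt1 hlt2
    obtain ⟨hp1C, hp2C, hpu_mem, hpw_mem⟩ := hmemSS p hp
    obtain ⟨hq1C, hq2C, hqu_mem, hqw_mem⟩ := hmemSS q hq
    obtain ⟨hp1, hp2, hpadj⟩ := hp
    obtain ⟨hq1, hq2, hqadj⟩ := hq
    have hne1 : p.1 ≠ q.1 := by
      intro h
      rw [h] at hlt1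
      exact lt_irrefl _ hlt1
    have hne2 : q.2 ≠ p.2 := by
      intro h
      rw [h] at hlt2
      exact lt_irrefl _ hlt2
    rw [arcLen_eq hA hp1C, arcLen_eq hA hq1C] at hlt1
    rw [arcLen_eq hB hq2C, arcLen_eq hB hp2C] at hlt2
    have hu12 : p.1 ∈ (arcW C hA hq1C).support :=
      arc_mem_of_le hA hp1C hq1C (le_of_lt hlt1)
    have hw21 : q.2 ∈ (arcW C hB hp2C).support :=
      arc_mem_of_le hB hq2C hp2C (le_of_lt hlt2)
    have call1 := chord_ineq_nested hC hPpath hPoff hA hA' hB hB' hp1C hq1C hp2C hq2C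
      hAA' hBB' hqu_mem hu12 hpw_mem hw21 hne1 hne2 hq2.2.1 hp2.2.2 hord1 hord2
      (hadjy _ hξb'N) (hξbN.2).symm hpadj hqadj.symm
    have call2 := chord_ineq_nested hC hPpath hPoff hB hB' hA hA' hq2C hp2C hq1C hp1C
      hBB' hAA' hpw_mem hw21 hqu_mem hu12 hne2 hne1 hp1.2.1 hq1.2.2 horda1' horda2'
      (hadjy _ hξa'N) (hξaN.2).symm hqadj.symm hpadj
    have E1b := congrArg Walk.length (arc_trans hCcyc hA hq1C hA' hqu_mem)
    have E1a := congrArg Walk.length (arc_trans hCcyc hA hp1C hq1C hu12)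
    have E4b := congrArg Walk.length (arc_trans hCcyc hB hp2C hB' hpw_mem)
    have E4a := congrArg Walk.length (arc_trans hCcyc hB hq2C hp2C hw21)
    simp only [Walk.length_append] at E1a E1b E4a E4b
    rw [arcLen_eq hA hA', arcLen_eq hB hB']
    omega
  -- the nested route from two distinct chords with equal weight
  have nest_route : ∀ p q : V × V, p ∈ SS → q ∈ SS → p ≠ q →
      arcLen C ξa p.1 + arcLen C ξb p.2 = arcLen C ξa q.1 + arcLen C ξb q.2 →
      2 * P.length + 8 ≤ arcLen C ξa ξa' + arcLen C ξb ξb' := by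
    intro p q hp hq hne hσ
    obtain ⟨hp1C, hp2C, hpu_mem, hpw_mem⟩ := hmemSS p hp
    obtain ⟨hq1C, hq2C, hqu_mem, hqw_mem⟩ := hmemSS q hq
    have hrne : arcLen C ξa p.1 ≠ arcLen C ξa q.1 := by
      intro h
      apply hne
      have h1 : p.1 = q.1 := by
        apply arc_end_inj hA hp1C hq1C
        rw [← arcLen_eq hA hp1C, ← arcLen_eq hA hq1C]
        exact h
      have hs : arcLen C ξb p.2 = arcLen C ξb q.2 := by omega
      have h2 : p.2 = q.2 := by
        apply arc_end_inj hB hp2C hq2C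
        rw [← arcLen_eq hB hp2C, ← arcLen_eq hB hq2C]
        exact hs
      exact Prod.ext h1 h2
    rcases lt_or_gt_of_ne hrne with hlt | hlt
    · exact nest_of_lt p q hp hq hlt (by omega)
    · exact nest_of_lt q p hq hp hlt (by omega)
  -- final case analysis over i
  rcases hi with rfl | hi
  · obtain ⟨p, hSeq⟩ := Set.ncard_eq_one.1 hcount
    have hp : p ∈ SS := by rw [hSeq]; simp
    have k1 := key1 p hp
    have k2 := key2 p hp
    have sA := splitA p hp
    have sB := splitB p hp
    omega
  rcases hi with rfl | hi
  · obtain ⟨p, q, hne, hSeq⟩ := Set.ncard_eq_two.1 hcount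
    have hp : p ∈ SS := by rw [hSeq]; simp
    have hq : q ∈ SS := by rw [hSeq]; simp
    by_cases hσ : arcLen C ξa p.1 + arcLen C ξb p.2 = arcLen C ξa q.1 + arcLen C ξb q.2
    · have := nest_route p q hp hq hne hσ
      omega
    · have k1p := key1 p hp
      have k1q := key1 q hq
      have k2p := key2 p hp
      have k2q := key2 q hq
      have sAp := splitA p hp
      have sAq := splitA q hq
      have sBp := splitB p hp
      have sBq := splitB q hq
      omega
  rcases hi with rfl
  · obtain ⟨p, q, r, hpq, hpr, hqr, hSeq⟩ := Set.ncard_eq_three.1 hcount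
    have hp : p ∈ SS := by rw [hSeq]; simp
    have hq : q ∈ SS := by rw [hSeq]; simp
    have hr : r ∈ SS := by rw [hSeq]; simp
    by_cases h1 : arcLen C ξa p.1 + arcLen C ξb p.2 = arcLen C ξa q.1 + arcLen C ξb q.2
    · have := nest_route p q hp hq hpq h1
      omega
    by_cases h2 : arcLen C ξa p.1 + arcLen C ξb p.2 = arcLen C ξa r.1 + arcLen C ξb r.2
    · have := nest_route p r hp hr hpr h2
      omega
    by_cases h3 : arcLen C ξa q.1 + arcLen C ξb q.2 = arcLen C ξa r.1 + arcLen C ξb r.2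
    · have := nest_route q r hq hr hqr h3
      omega
    · have k1p := key1 p hp
      have k1q := key1 q hq
      have k1r := key1 r hr
      have k2p := key2 p hp
      have k2q := key2 q hq
      have k2r := key2 r hr
      have sAp := splitA p hp
      have sAq := splitA q hq
      have sAr := splitA r hr
      have sBp := splitB p hp
      have sBq := splitB q hq
      have sBr := splitB r hr
      omega

end ToughPaper
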